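/- Let U be a Uniform(0,1) random variable and define Y' = F_{x'}^{−1}(U) and Y'' = F_{x''}^{−1}(U), where F_x is the cumulative distribution function of the one-parameter exponential family density p(y|η) with x = B(η), and F_x^{−1}(u) = inf{t ≥ 0 : F_x(t) ≥ u}. If x' = B(η') and x'' = B(η''), then E|Y' − Y''| = |x' − x''|. -/
import Mathlib


open MeasureTheory

/-- The one-parameter exponential family distribution with natural parameter `η`:
the measure with density `y ↦ exp (η y − A η) * h y` with respect to the base measure `μ`. -/
noncomputable def expFam (μ : Measure ℝ) (A h : ℝ → ℝ) (η : ℝ) : Measure ℝ :=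
  μ.withDensity fun y => ENNReal.ofReal (Real.exp (η * y - A η) * h y)

open Set

section aux
variable (μ : Measure ℝ) (A h : ℝ → ℝ) (η : ℝ)

lemma expFam_apply {s : Set ℝ} (hs : MeasurableSet s) :
    expFam μ A h η s = ∫⁻ y in s, ENNReal.ofReal (Real.exp (η * y - A η) * h y) ∂μ :=
  withDensity_apply _ hs

lemma expFam_Iio_neg (hsupp : μ (Set.Iio 0) = 0) : expFam μ A h η (Set.Iio 0) = 0 := by
  rw [expFam_apply μ A h η measurableSet_Iio, setLIntegral_measure_zero _ _ hsupp]

lemma expFam_Iic_neg (hsupp : μ (Set.Iio 0) = 0) {t : ℝ} (ht : t < 0) :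
    expFam μ A h η (Set.Iic t) = 0 :=
  measure_mono_null (fun y hy => lt_of_le_of_lt hy ht) (expFam_Iio_neg μ A h η hsupp)

/-- the set whose infimum is the quantile -/
def qset (u : ℝ) : Set ℝ := {t : ℝ | 0 ≤ t ∧ ENNReal.ofReal u ≤ expFam μ A h η (Set.Iic t)}

lemma qset_nonempty [IsProbabilityMeasure (expFam μ A h η)] {u : ℝ} (hu : u < 1) :
    (qset μ A h η u).Nonempty := by
  have h1 : ENNReal.ofReal u < 1 := ENNReal.ofReal_lt_one.mpr hu
  have := tendsto_measure_Iic_atTop (expFam μ A h η)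
  rw [measure_univ] at this
  have h2 : ∀ᶠ t in Filter.atTop, ENNReal.ofReal u < expFam μ A h η (Set.Iic t) :=
    this.eventually_const_lt h1
  obtain ⟨t, ht, ht0⟩ := (h2.and (Filter.eventually_ge_atTop (0:ℝ))).exists
  exact ⟨t, ht0, ht.le⟩

end aux

section aux2
variable (μ : Measure ℝ) (A h : ℝ → ℝ) (η : ℝ)

lemma qset_sInf_mem [IsProbabilityMeasure (expFam μ A h η)] {u : ℝ} (hne : (qset μ A h η u).Nonempty) :
    sInf (qset μ A h η u) ∈ qset μ A h η u := by
  set S := qset μ A h η u with hS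
  have hbdd : BddBelow S := ⟨0, fun t ht => ht.1⟩
  have h0 : 0 ≤ sInf S := le_csInf hne fun t ht => ht.1
  refine ⟨h0, ?_⟩
  set m := sInf S
  -- right continuity
  have hseq : ∀ n : ℕ, ENNReal.ofReal u ≤ expFam μ A h η (Set.Iic (m + 1/(n+1))) := by
    intro n
    obtain ⟨t, htS, htlt⟩ := Real.lt_sInf_add_pos hne (by positivity : (0:ℝ) < 1/(n+1))
    exact htS.2.trans (measure_mono (Set.Iic_subset_Iic.mpr htlt.le))
  have hInter : (⋂ n : ℕ, Set.Iic (m + 1/(n+1))) = Set.Iic m := by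
    ext y
    simp only [Set.mem_iInter, Set.mem_Iic]
    constructor
    · intro hy
      by_contra hlt
      push_neg at hlt
      obtain ⟨n, hn⟩ := exists_nat_one_div_lt (by linarith : (0:ℝ) < y - m)
      have := hy n
      linarith [hn]
    · intro hy n
      have : (0:ℝ) < 1/(n+1) := by positivity
      linarith
  have htend : Filter.Tendsto (fun n : ℕ => expFam μ A h η (Set.Iic (m + 1/(n+1))))
      Filter.atTop (nhds (expFam μ A h η (Set.Iic m))) := by
    have := tendsto_measure_iInter_atTop (μ := expFam μ A h η)
      (s := fun n : ℕ => Set.Iic (m + 1/(n+1)))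
      (fun n => measurableSet_Iic.nullMeasurableSet)
      (fun i j hij => Set.Iic_subset_Iic.mpr (by
        have : (1:ℝ)/(j+1) ≤ 1/(i+1) := by
          apply one_div_le_one_div_of_le (by positivity)
          exact_mod_cast by omega
        linarith))
      ⟨0, measure_ne_top _ _⟩
    rwa [hInter] at this
  exact ge_of_tendsto' htend hseq

lemma qtl_le_iff [IsProbabilityMeasure (expFam μ A h η)] {u t : ℝ} (hu : u < 1) :
    sInf (qset μ A h η u) ≤ t ↔ (0 ≤ t ∧ ENNReal.ofReal u ≤ expFam μ A h η (Set.Iic t)) := by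
  have hne := qset_nonempty μ A h η hu
  constructor
  · intro hle
    have hm := qset_sInf_mem μ A h η hne
    exact ⟨hm.1.trans hle, hm.2.trans (measure_mono (Set.Iic_subset_Iic.mpr hle))⟩
  · intro ht
    exact csInf_le ⟨0, fun s hs => hs.1⟩ ht

end aux2

section aux3
variable (μ : Measure ℝ) (A h : ℝ → ℝ) (η : ℝ)

noncomputable def Q (u : ℝ) : ℝ := (Set.Ioo (0:ℝ) 1).piecewise (fun u => sInf (qset μ A h η u)) 0 u

lemma qtl_nonneg (u : ℝ) : 0 ≤ sInf (qset μ A h η u) :=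
  Real.sInf_nonneg fun t ht => ht.1

lemma Q_nonneg (u : ℝ) : 0 ≤ Q μ A h η u := by
  unfold Q
  by_cases hu : u ∈ Set.Ioo (0:ℝ) 1
  · rw [Set.piecewise_eq_of_mem _ _ _ hu]; exact qtl_nonneg μ A h η u
  · simp [Set.piecewise_eq_of_notMem _ _ _ hu]

lemma Q_preimage_Iic [IsProbabilityMeasure (expFam μ A h η)] (hsupp : μ (Set.Iio 0) = 0) (t : ℝ) :
    Set.Ioo (0:ℝ) 1 ∩ (fun u => sInf (qset μ A h η u)) ⁻¹' Set.Iic t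
      = if 0 ≤ t then Set.Ioo (0:ℝ) 1 ∩ Set.Iic (expFam μ A h η (Set.Iic t)).toReal
        else ∅ := by
  split_ifs with h0
  · ext u
    simp only [Set.mem_inter_iff, Set.mem_preimage, Set.mem_Iic, and_congr_right_iff]
    intro hu
    rw [qtl_le_iff μ A h η hu.2]
    have hfin : expFam μ A h η (Set.Iic t) ≠ ⊤ := measure_ne_top _ _
    rw [and_iff_right h0, ENNReal.ofReal_le_iff_le_toReal hfin]
  · ext u
    simp only [Set.mem_inter_iff, Set.mem_preimage, Set.mem_Iic, Set.mem_empty_iff_false,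
      iff_false]
    rintro ⟨hu, hle⟩
    exact absurd (le_trans (qtl_nonneg μ A h η u) hle) (not_le.mpr (lt_of_not_ge h0))

lemma Q_measurable [IsProbabilityMeasure (expFam μ A h η)] (hsupp : μ (Set.Iio 0) = 0) :
    Measurable (Q μ A h η) := by
  apply measurable_of_Iic
  intro t
  have : Q μ A h η ⁻¹' Set.Iic t =
      (Set.Ioo (0:ℝ) 1 ∩ (fun u => sInf (qset μ A h η u)) ⁻¹' Set.Iic t)
      ∪ ((Set.Ioo (0:ℝ) 1)ᶜ ∩ (fun _ : ℝ => (0:ℝ)) ⁻¹' Set.Iic t) := by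
    ext u
    by_cases hu : u ∈ Set.Ioo (0:ℝ) 1 <;>
      simp [Q, Set.piecewise, hu]
  rw [this, Q_preimage_Iic μ A h η hsupp]
  split_ifs with h0
  · exact ((measurableSet_Ioo.inter measurableSet_Iic).union
      (measurableSet_Ioo.compl.inter (measurable_const measurableSet_Iic)))
  · simp only [Set.empty_union]
    exact measurableSet_Ioo.compl.inter (measurable_const measurableSet_Iic)

end aux3

section aux4
variable (μ : Measure ℝ) (A h : ℝ → ℝ) (η : ℝ)

instance : IsProbabilityMeasure (volume.restrict (Set.Ioo (0:ℝ) 1)) :=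
  ⟨by simp [Real.volume_Ioo]⟩

lemma Q_map [IsProbabilityMeasure (expFam μ A h η)] (hsupp : μ (Set.Iio 0) = 0) :
    Measure.map (Q μ A h η) (volume.restrict (Set.Ioo (0:ℝ) 1)) = expFam μ A h η := by
  have hQm := Q_measurable μ A h η hsupp
  have : IsProbabilityMeasure (Measure.map (Q μ A h η) (volume.restrict (Set.Ioo (0:ℝ) 1))) :=
    Measure.isProbabilityMeasure_map hQm.aemeasurable
  refine Measure.ext_of_Iic _ _ (fun t => ?_)
  rw [Measure.map_apply hQm measurableSet_Iic,
    Measure.restrict_apply (hQm measurableSet_Iic)]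
  have hpre : Q μ A h η ⁻¹' Set.Iic t ∩ Set.Ioo 0 1
      = Set.Ioo (0:ℝ) 1 ∩ (fun u => sInf (qset μ A h η u)) ⁻¹' Set.Iic t := by
    ext u
    by_cases hu : u ∈ Set.Ioo (0:ℝ) 1 <;> simp [Q, Set.piecewise, hu, and_comm]
  rw [hpre, Q_preimage_Iic μ A h η hsupp]
  split_ifs with h0
  · set a := (expFam μ A h η (Set.Iic t)).toReal with ha
    have ha0 : 0 ≤ a := ENNReal.toReal_nonneg
    have ha1 : a ≤ 1 := by
      rw [ha]
      exact ENNReal.toReal_le_of_le_ofReal one_pos.le (by simpa using prob_le_one)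
    have hfin : expFam μ A h η (Set.Iic t) ≠ ⊤ := measure_ne_top _ _
    have hle : volume (Set.Ioo (0:ℝ) 1 ∩ Set.Iic a) ≤ ENNReal.ofReal a := by
      refine le_trans (measure_mono ?_) (le_of_eq (by rw [Real.volume_Ioc, sub_zero]))
      rintro u ⟨⟨hu0, _⟩, hua⟩
      exact ⟨hu0, hua⟩
    have hge : ENNReal.ofReal a ≤ volume (Set.Ioo (0:ℝ) 1 ∩ Set.Iic a) := by
      refine le_trans (le_of_eq (by rw [Real.volume_Ioo, sub_zero] : ENNReal.ofReal a = volume (Set.Ioo (0:ℝ) a))) (measure_mono ?_)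
      rintro u ⟨hu0, hua⟩
      exact ⟨⟨hu0, lt_of_lt_of_le hua ha1⟩, hua.le⟩
    have : volume (Set.Ioo (0:ℝ) 1 ∩ Set.Iic a) = ENNReal.ofReal a := le_antisymm hle hge
    rw [this, ha, ENNReal.ofReal_toReal hfin]
  · rw [expFam_Iic_neg μ A h η hsupp (lt_of_not_ge h0)]
    simp

end aux4

section aux5
variable (μ : Measure ℝ) (A h : ℝ → ℝ)

lemma dens_le {η₁ η₂ c y : ℝ} (hlt : η₁ < η₂) (hc : c = (A η₂ - A η₁) / (η₂ - η₁))
    (hh : ∀ y, 0 ≤ h y) (hy : y ≤ c) :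
    Real.exp (η₂ * y - A η₂) * h y ≤ Real.exp (η₁ * y - A η₁) * h y := by
  apply mul_le_mul_of_nonneg_right _ (hh y)
  apply Real.exp_le_exp.mpr
  have hd : 0 < η₂ - η₁ := by linarith
  have : (η₂ - η₁) * y ≤ A η₂ - A η₁ := by
    rw [hc] at hy
    calc (η₂ - η₁) * y ≤ (η₂ - η₁) * ((A η₂ - A η₁) / (η₂ - η₁)) :=
          mul_le_mul_of_nonneg_left hy hd.le
      _ = A η₂ - A η₁ := by field_simp
  nlinarith

lemma dens_ge {η₁ η₂ c y : ℝ} (hlt : η₁ < η₂) (hc : c = (A η₂ - A η₁) / (η₂ - η₁))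
    (hh : ∀ y, 0 ≤ h y) (hy : c ≤ y) :
    Real.exp (η₁ * y - A η₁) * h y ≤ Real.exp (η₂ * y - A η₂) * h y := by
  apply mul_le_mul_of_nonneg_right _ (hh y)
  apply Real.exp_le_exp.mpr
  have hd : 0 < η₂ - η₁ := by linarith
  have : A η₂ - A η₁ ≤ (η₂ - η₁) * y := by
    rw [hc] at hy
    calc A η₂ - A η₁ = (η₂ - η₁) * ((A η₂ - A η₁) / (η₂ - η₁)) := by field_simp
      _ ≤ (η₂ - η₁) * y := mul_le_mul_of_nonneg_left hy hd.le
  nlinarith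

lemma stoch_dom {η₁ η₂ : ℝ} (hle : η₁ ≤ η₂) (hh : ∀ y, 0 ≤ h y)
    [IsProbabilityMeasure (expFam μ A h η₁)] [IsProbabilityMeasure (expFam μ A h η₂)]
    (t : ℝ) : expFam μ A h η₂ (Set.Iic t) ≤ expFam μ A h η₁ (Set.Iic t) := by
  rcases eq_or_lt_of_le hle with heq | hlt
  · rw [heq]
  set c := (A η₂ - A η₁) / (η₂ - η₁) with hc
  rcases le_or_gt t c with htc | hct
  · rw [expFam_apply μ A h η₂ measurableSet_Iic, expFam_apply μ A h η₁ measurableSet_Iic]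
    apply lintegral_mono_ae
    refine (ae_restrict_iff' measurableSet_Iic).mpr (Filter.Eventually.of_forall ?_)
    intro y hy
    exact ENNReal.ofReal_le_ofReal (dens_le A h hlt hc hh (le_trans hy htc))
  · have hIoi : expFam μ A h η₁ (Set.Ioi t) ≤ expFam μ A h η₂ (Set.Ioi t) := by
      rw [expFam_apply μ A h η₁ measurableSet_Ioi, expFam_apply μ A h η₂ measurableSet_Ioi]
      apply lintegral_mono_ae
      refine (ae_restrict_iff' measurableSet_Ioi).mpr (Filter.Eventually.of_forall ?_)
      intro y hy
      exact ENNReal.ofReal_le_ofReal (dens_ge A h hlt hc hh (le_of_lt (lt_trans hct hy)))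
    have e1 : expFam μ A h η₂ (Set.Iic t) = 1 - expFam μ A h η₂ (Set.Ioi t) := by
      rw [← Set.compl_Ioi, measure_compl measurableSet_Ioi (measure_ne_top _ _), measure_univ]
    have e2 : expFam μ A h η₁ (Set.Iic t) = 1 - expFam μ A h η₁ (Set.Ioi t) := by
      rw [← Set.compl_Ioi, measure_compl measurableSet_Ioi (measure_ne_top _ _), measure_univ]
    rw [e1, e2]
    exact tsub_le_tsub_left hIoi 1

lemma qtl_mono {η₁ η₂ : ℝ} (hle : η₁ ≤ η₂) (hh : ∀ y, 0 ≤ h y)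
    [IsProbabilityMeasure (expFam μ A h η₁)] [IsProbabilityMeasure (expFam μ A h η₂)]
    {u : ℝ} (hu : u < 1) :
    sInf (qset μ A h η₁ u) ≤ sInf (qset μ A h η₂ u) := by
  apply csInf_le_csInf ⟨0, fun s hs => hs.1⟩ (qset_nonempty μ A h η₂ hu)
  rintro t ⟨ht0, htu⟩
  exact ⟨ht0, htu.trans (stoch_dom μ A h hle hh t)⟩

lemma Q_mono {η₁ η₂ : ℝ} (hle : η₁ ≤ η₂) (hh : ∀ y, 0 ≤ h y)
    [IsProbabilityMeasure (expFam μ A h η₁)] [IsProbabilityMeasure (expFam μ A h η₂)]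
    (u : ℝ) : Q μ A h η₁ u ≤ Q μ A h η₂ u := by
  unfold Q
  by_cases hu : u ∈ Set.Ioo (0:ℝ) 1
  · rw [Set.piecewise_eq_of_mem _ _ _ hu, Set.piecewise_eq_of_mem _ _ _ hu]
    exact qtl_mono μ A h hle hh hu.2
  · rw [Set.piecewise_eq_of_notMem _ _ _ hu, Set.piecewise_eq_of_notMem _ _ _ hu]

end aux5

section aux6
variable (μ : Measure ℝ) (A h : ℝ → ℝ) (η : ℝ)

lemma Q_integral_eq [IsProbabilityMeasure (expFam μ A h η)] (hsupp : μ (Set.Iio 0) = 0) :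
    ∫ u, Q μ A h η u ∂(volume.restrict (Set.Ioo (0:ℝ) 1)) = ∫ y, y ∂(expFam μ A h η) := by
  rw [← Q_map μ A h η hsupp]
  exact (integral_map (Q_measurable μ A h η hsupp).aemeasurable aestronglyMeasurable_id).symm

lemma Q_integrable_iff [IsProbabilityMeasure (expFam μ A h η)] (hsupp : μ (Set.Iio 0) = 0) :
    Integrable (Q μ A h η) (volume.restrict (Set.Ioo (0:ℝ) 1))
      ↔ Integrable (fun y => y) (expFam μ A h η) := by
  rw [← Q_map μ A h η hsupp]
  exact (integrable_map_measure aestronglyMeasurable_id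
    (Q_measurable μ A h η hsupp).aemeasurable).symm

lemma expFam_integral_nonneg [IsProbabilityMeasure (expFam μ A h η)]
    (hsupp : μ (Set.Iio 0) = 0) : 0 ≤ ∫ y, y ∂(expFam μ A h η) := by
  apply integral_nonneg_of_ae
  rw [Filter.EventuallyLE, ae_iff]
  refine measure_mono_null (fun y hy => ?_) (expFam_Iio_neg μ A h η hsupp)
  simpa using not_le.mp hy

end aux6

/-- The generalized inverse CDF `F_x⁻¹(u) = inf {t ≥ 0 : F_x t ≥ u}`, where `F_x` is the
CDF of the exponential family member with mean `x = B(η)` (i.e. natural parameter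
`η = B⁻¹(x)`). -/
noncomputable def qtl (μ : Measure ℝ) (A h B : ℝ → ℝ) (x u : ℝ) : ℝ :=
  sInf {t : ℝ | 0 ≤ t ∧ ENNReal.ofReal u ≤ expFam μ A h (Function.invFun B x) (Set.Iic t)}

lemma qtl_eq (μ : Measure ℝ) (A h B : ℝ → ℝ) (hB : StrictMono B) (η u : ℝ) :
    qtl μ A h B (B η) u = sInf (qset μ A h η u) := by
  unfold qtl qset
  rw [Function.leftInverse_invFun hB.injective η]

lemma key {Ω : Type*} [MeasurableSpace Ω] (P : Measure Ω) [IsProbabilityMeasure P]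
    (μ : Measure ℝ) [SigmaFinite μ] (A h B : ℝ → ℝ)
    (hsupp : μ (Set.Iio 0) = 0) (hh : ∀ y, 0 ≤ h y)
    (hB : StrictMono B)
    (η' η'' : ℝ) (hle : η'' ≤ η')
    (hp' : IsProbabilityMeasure (expFam μ A h η'))
    (hp'' : IsProbabilityMeasure (expFam μ A h η''))
    (hm' : ∫ y, y ∂expFam μ A h η' = B η')
    (hm'' : ∫ y, y ∂expFam μ A h η'' = B η'')
    (U : Ω → ℝ) (hU : Measurable U)
    (hUlaw : Measure.map U P = volume.restrict (Set.Ioo (0 : ℝ) 1)) :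
    ∫ ω, |qtl μ A h B (B η') (U ω) - qtl μ A h B (B η'') (U ω)| ∂P = B η' - B η'' := by
  rcases eq_or_lt_of_le hle with heq | hlt
  · subst heq
    simp
  -- integrability of the mean of expFam η'
  have hint' : Integrable (fun y => y) (expFam μ A h η') := by
    by_contra hni
    rw [integral_undef hni] at hm'
    have h1 : B η'' < B η' := hB hlt
    have h2 : 0 ≤ ∫ y, y ∂(expFam μ A h η'') := expFam_integral_nonneg μ A h η'' hsupp
    rw [hm''] at h2
    rw [← hm'] at h1
    linarith
  have hQ'm := Q_measurable μ A h η' hsupp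
  have hQ''m := Q_measurable μ A h η'' hsupp
  -- a.e. U ω ∈ Ioo 0 1
  have hae : ∀ᵐ ω ∂P, U ω ∈ Set.Ioo (0:ℝ) 1 := by
    rw [ae_iff]
    have : P (U ⁻¹' Set.Ioo (0:ℝ) 1) = 1 := by
      rw [← Measure.map_apply hU measurableSet_Ioo, hUlaw,
        Measure.restrict_apply measurableSet_Ioo, Set.inter_self, Real.volume_Ioo]
      simp
    have hcompl : P ((U ⁻¹' Set.Ioo (0:ℝ) 1)ᶜ) = 0 := by
      rw [measure_compl (hU measurableSet_Ioo) (measure_ne_top _ _), this, measure_univ]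
      simp
    refine measure_mono_null (fun ω hω => ?_) hcompl
    exact hω
  -- integrability of compositions
  have hint'P : Integrable (fun ω => Q μ A h η' (U ω)) P := by
    have h1 : Integrable (Q μ A h η') (volume.restrict (Set.Ioo (0:ℝ) 1)) :=
      (Q_integrable_iff μ A h η' hsupp).mpr hint'
    rw [← hUlaw] at h1
    exact (integrable_map_measure hQ'm.aestronglyMeasurable hU.aemeasurable).mp h1
  have hint''P : Integrable (fun ω => Q μ A h η'' (U ω)) P := by
    refine Integrable.mono' hint'P ((hQ''m.comp hU).aestronglyMeasurable) ?_
    refine Filter.Eventually.of_forall fun ω => ?_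
    rw [Real.norm_eq_abs, abs_of_nonneg (Q_nonneg μ A h η'' (U ω))]
    exact Q_mono μ A h hle hh (U ω)
  -- a.e. rewrite of the integrand
  have haeeq : (fun ω => |qtl μ A h B (B η') (U ω) - qtl μ A h B (B η'') (U ω)|)
      =ᵐ[P] fun ω => Q μ A h η' (U ω) - Q μ A h η'' (U ω) := by
    filter_upwards [hae] with ω hω
    rw [qtl_eq μ A h B hB, qtl_eq μ A h B hB]
    have e' : Q μ A h η' (U ω) = sInf (qset μ A h η' (U ω)) :=
      Set.piecewise_eq_of_mem _ _ _ hω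
    have e'' : Q μ A h η'' (U ω) = sInf (qset μ A h η'' (U ω)) :=
      Set.piecewise_eq_of_mem _ _ _ hω
    rw [← e', ← e'']
    exact abs_of_nonneg (sub_nonneg.mpr (Q_mono μ A h hle hh (U ω)))
  rw [integral_congr_ae haeeq, integral_sub hint'P hint''P]
  have hI : ∀ (η : ℝ), IsProbabilityMeasure (expFam μ A h η) →
      ∫ ω, Q μ A h η (U ω) ∂P = ∫ y, y ∂(expFam μ A h η) := by
    intro η hp
    rw [← Q_integral_eq μ A h η hsupp, ← hUlaw,
      integral_map hU.aemeasurable (Q_measurable μ A h η hsupp).aestronglyMeasurable]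
  rw [hI η' hp', hI η'' hp'', hm', hm'']

/-- if `U ~ Uniform(0,1)` and `Y' = F_{x'}⁻¹(U)`, `Y'' = F_{x''}⁻¹(U)` where
`x' = B η'`, `x'' = B η''` are the means of the corresponding exponential family members,
then `E |Y' − Y''| = |x' − x''|`. -/
theorem stmt1 {Ω : Type*} [MeasurableSpace Ω] (P : Measure Ω) [IsProbabilityMeasure P]
    (μ : Measure ℝ) [SigmaFinite μ] (A h B : ℝ → ℝ)
    (hsupp : μ (Set.Iio 0) = 0) (hh : ∀ y, 0 ≤ h y)
    (hB : StrictMono B) (hAB : ∀ η, HasDerivAt A (B η) η)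
    (η' η'' : ℝ)
    (hp' : IsProbabilityMeasure (expFam μ A h η'))
    (hp'' : IsProbabilityMeasure (expFam μ A h η''))
    (hm' : ∫ y, y ∂expFam μ A h η' = B η')
    (hm'' : ∫ y, y ∂expFam μ A h η'' = B η'')
    (U : Ω → ℝ) (hU : Measurable U)
    (hUlaw : Measure.map U P = volume.restrict (Set.Ioo (0 : ℝ) 1)) :
    ∫ ω, |qtl μ A h B (B η') (U ω) - qtl μ A h B (B η'') (U ω)| ∂P = |B η' - B η''| := by
  rcases le_total η'' η' with hle | hle
  · rw [key P μ A h B hsupp hh hB η' η'' hle hp' hp'' hm' hm'' U hU hUlaw,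
      abs_of_nonneg (sub_nonneg.mpr (hB.monotone hle))]
  · simp only [abs_sub_comm (qtl μ A h B (B η') _)]
    rw [key P μ A h B hsupp hh hB η'' η' hle hp'' hp' hm'' hm' U hU hUlaw,
      abs_sub_comm, abs_of_nonneg (sub_nonneg.mpr (hB.monotone hle))]
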